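/- Let ζ_1,…,ζ_H be i.i.d. Uniform([0,1/2]). For fixed ε ∈ (0,1/2), with probability at least 1 − 24·S·A·H·ε over the draw of ζ_{1:H}, the following holds for every layer h ∈ [H] and every pair (s,a) ∈ S × A simultaneously: the half-open unit interval (⌈g_h(s,a)/ε + ζ_h⌉ − 1, ⌈g_h(s,a)/ε + ζ_h⌉] contains the point g_h(s,a)/ε + ζ_h with margin 4ε on both sides, i.e., g_h(s,a)/ε + ζ_h + 4ε ≤ ⌈g_h(s,a)/ε + ζ_h⌉ and g_h(s,a)/ε + ζ_h − 4ε > ⌈g_h(s,a)/ε + ζ_h⌉ − 1. -/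

import Mathlib

open MeasureTheory
open scoped ENNReal

namespace Stmt15Aux

/-- Enlarged bad set of shift values `t` for a given `x`. -/
def T (x ε : ℝ) : Set ℝ :=
  ⋃ n : ℤ, Set.Icc ((n : ℝ) - x - 4*ε) ((n : ℝ) - x + 4*ε)

lemma measurableSet_T (x ε : ℝ) : MeasurableSet (T x ε) :=
  MeasurableSet.iUnion fun _ => measurableSet_Icc

lemma bad_subset_T (x ε t : ℝ) (hε : 0 < ε)
    (hbad : ¬ (x + t + 4*ε ≤ (⌈x + t⌉ : ℝ) ∧ x + t - 4*ε > (⌈x + t⌉ : ℝ) - 1)) :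
    t ∈ T x ε := by
  by_cases h1 : x + t + 4*ε ≤ (⌈x + t⌉ : ℝ)
  · have h2 : ¬ (x + t - 4*ε > (⌈x + t⌉ : ℝ) - 1) := fun h => hbad ⟨h1, h⟩
    push_neg at h2
    refine Set.mem_iUnion.2 ⟨⌈x + t⌉ - 1, ?_⟩
    push_cast
    constructor <;> nlinarith [Int.ceil_lt_add_one (x + t), Int.le_ceil (x + t)]
  · push_neg at h1
    refine Set.mem_iUnion.2 ⟨⌈x + t⌉, ?_⟩
    constructor <;> nlinarith [Int.ceil_lt_add_one (x + t), Int.le_ceil (x + t)]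

lemma T_inter_subset (x ε : ℝ) (hε : 0 < ε) (hε' : ε < 1/24) :
    T x ε ∩ Set.Icc (0:ℝ) (1/2) ⊆
      Set.Icc ((⌈x - 4*ε⌉ : ℝ) - x - 4*ε) ((⌈x - 4*ε⌉ : ℝ) - x + 4*ε) := by
  rintro t ⟨hT, ht0, ht1⟩
  obtain ⟨n, hn1, hn2⟩ := Set.mem_iUnion.1 hT
  have hceil : x - 4*ε ≤ (⌈x - 4*ε⌉ : ℝ) := Int.le_ceil _
  have hceil' : (⌈x - 4*ε⌉ : ℝ) < x - 4*ε + 1 := Int.ceil_lt_add_one _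
  have h1 : ⌈x - 4*ε⌉ ≤ n := by
    have : x - 4*ε ≤ (n:ℝ) := by linarith
    exact Int.ceil_le.2 this
  have h2 : n ≤ ⌈x - 4*ε⌉ := by
    have hlt : (n:ℝ) < (⌈x - 4*ε⌉:ℝ) + 1 := by linarith
    have : n < ⌈x - 4*ε⌉ + 1 := by exact_mod_cast hlt
    omega
  have hn : n = ⌈x - 4*ε⌉ := le_antisymm h2 h1
  subst hn
  exact ⟨hn1, hn2⟩

lemma T_measure (x ε : ℝ) (hε : 0 < ε) (hε' : ε < 1/24) :
    ((2 : ℝ≥0∞) • volume.restrict (Set.Icc (0 : ℝ) (1/2))) (T x ε)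
      ≤ ENNReal.ofReal (16 * ε) := by
  rw [Measure.smul_apply, Measure.restrict_apply (measurableSet_T x ε)]
  have hmono : volume (T x ε ∩ Set.Icc (0:ℝ) (1/2))
      ≤ volume (Set.Icc ((⌈x - 4*ε⌉ : ℝ) - x - 4*ε) ((⌈x - 4*ε⌉ : ℝ) - x + 4*ε)) :=
    measure_mono (T_inter_subset x ε hε hε')
  have hIcc : volume (Set.Icc ((⌈x - 4*ε⌉ : ℝ) - x - 4*ε) ((⌈x - 4*ε⌉ : ℝ) - x + 4*ε))
      = ENNReal.ofReal (8 * ε) := by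
    rw [Real.volume_Icc]; ring_nf
  calc (2 : ℝ≥0∞) • volume (T x ε ∩ Set.Icc (0:ℝ) (1/2))
      ≤ (2 : ℝ≥0∞) • ENNReal.ofReal (8 * ε) := by
        rw [smul_eq_mul, smul_eq_mul]
        exact mul_le_mul_right (hIcc ▸ hmono) _
    _ = ENNReal.ofReal (16 * ε) := by
        rw [smul_eq_mul, show (2:ℝ≥0∞) = ENNReal.ofReal 2 by norm_num,
          ← ENNReal.ofReal_mul (by norm_num)]
        congr 1; ring

end Stmt15Aux

open Stmt15Aux in
theorem stmt_15 {S A Ω : Type*} [Fintype S] [Fintype A]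
    [MeasurableSpace Ω] (P : Measure Ω) [IsProbabilityMeasure P]
    (H : ℕ) (ε : ℝ) (hε : ε ∈ Set.Ioo (0 : ℝ) (1/2))
    (g : Fin H → S → A → ℝ)
    (hg : ∀ (h : Fin H) s a, g h s a ∈ Set.Icc (0 : ℝ) ((H : ℝ) - (h : ℕ) + 1))
    (ζ : Fin H → Ω → ℝ)
    (hmeas : ∀ h, Measurable (ζ h))
    (hindep : ProbabilityTheory.iIndepFun ζ P)
    (hunif : ∀ h, Measure.map (ζ h) P
      = (2 : ℝ≥0∞) • volume.restrict (Set.Icc (0 : ℝ) (1/2))) :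
    ENNReal.ofReal (1 - 24 * Fintype.card S * Fintype.card A * H * ε) ≤
      P {ω | ∀ (h : Fin H) (s : S) (a : A),
        g h s a / ε + ζ h ω + 4 * ε ≤ (⌈g h s a / ε + ζ h ω⌉ : ℝ) ∧
        g h s a / ε + ζ h ω - 4 * ε > (⌈g h s a / ε + ζ h ω⌉ : ℝ) - 1} := by
  obtain ⟨hε0, hε2⟩ := hε
  set Good : Set Ω := {ω | ∀ (h : Fin H) (s : S) (a : A),
        g h s a / ε + ζ h ω + 4 * ε ≤ (⌈g h s a / ε + ζ h ω⌉ : ℝ) ∧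
        g h s a / ε + ζ h ω - 4 * ε > (⌈g h s a / ε + ζ h ω⌉ : ℝ) - 1} with hGood
  by_cases htriv : 1 - 24 * (Fintype.card S : ℝ) * (Fintype.card A : ℝ) * H * ε ≤ 0
  · rw [ENNReal.ofReal_eq_zero.2 htriv]; exact zero_le
  push_neg at htriv
  by_cases hH : H = 0
  · have : Good = Set.univ := Set.eq_univ_iff_forall.2 fun ω h => ((hH ▸ h : Fin 0)).elim0
    rw [this, measure_univ]
    refine ENNReal.ofReal_le_one.2 ?_
    have hnn : (0:ℝ) ≤ 24 * (Fintype.card S : ℝ) * (Fintype.card A : ℝ) * H * ε := by positivity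
    linarith
  by_cases hSe : IsEmpty S
  · have : Good = Set.univ := Set.eq_univ_iff_forall.2 fun ω h s a => (hSe.false s).elim
    rw [this, measure_univ]
    refine ENNReal.ofReal_le_one.2 ?_
    have hnn : (0:ℝ) ≤ 24 * (Fintype.card S : ℝ) * (Fintype.card A : ℝ) * H * ε := by positivity
    linarith
  by_cases hAe : IsEmpty A
  · have : Good = Set.univ := Set.eq_univ_iff_forall.2 fun ω h s a => (hAe.false a).elim
    rw [this, measure_univ]
    refine ENNReal.ofReal_le_one.2 ?_
    have hnn : (0:ℝ) ≤ 24 * (Fintype.card S : ℝ) * (Fintype.card A : ℝ) * H * ε := by positivity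
    linarith
  have hS1 : (1:ℝ) ≤ Fintype.card S := by
    exact_mod_cast Fintype.card_pos_iff.2 (not_isEmpty_iff.1 hSe)
  have hA1 : (1:ℝ) ≤ Fintype.card A := by
    exact_mod_cast Fintype.card_pos_iff.2 (not_isEmpty_iff.1 hAe)
  have hH1 : (1:ℝ) ≤ H := by exact_mod_cast Nat.one_le_iff_ne_zero.2 hH
  have hε24 : ε < 1/24 := by
    by_contra hc; push_neg at hc
    have h0 : (0:ℝ) < 24 * ε := by linarith
    have s1 : (24*ε : ℝ) ≤ 24*ε*(Fintype.card S) := le_mul_of_one_le_right h0.le hS1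
    have s2 : (24*ε*(Fintype.card S) : ℝ) ≤ 24*ε*(Fintype.card S)*(Fintype.card A) :=
      le_mul_of_one_le_right (by positivity) hA1
    have s3 : (24*ε*(Fintype.card S)*(Fintype.card A) : ℝ)
        ≤ 24*ε*(Fintype.card S)*(Fintype.card A)*H :=
      le_mul_of_one_le_right (by positivity) hH1
    have heq : (24*ε*(Fintype.card S)*(Fintype.card A)*H : ℝ)
        = 24 * (Fintype.card S : ℝ) * (Fintype.card A : ℝ) * H * ε := by ring
    rw [heq] at s3
    linarith
  set Bad : Fin H × S × A → Set Ω :=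
    fun p => (ζ p.1) ⁻¹' (T (g p.1 p.2.1 p.2.2 / ε) ε) with hBad
  have hsub : Goodᶜ ⊆ ⋃ p, Bad p := by
    intro ω hω
    simp only [hGood, Set.mem_compl_iff, Set.mem_setOf_eq, not_forall] at hω
    obtain ⟨h, s, a, hcond⟩ := hω
    exact Set.mem_iUnion.2 ⟨⟨h, s, a⟩, bad_subset_T _ ε _ hε0 hcond⟩
  have hbound : ∀ p, P (Bad p) ≤ ENNReal.ofReal (16 * ε) := by
    rintro ⟨h, s, a⟩
    have hmap : P (Bad ⟨h, s, a⟩) = (Measure.map (ζ h) P) (T (g h s a / ε) ε) :=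
      (Measure.map_apply (hmeas h) (measurableSet_T _ _)).symm
    rw [hmap, hunif h]
    exact T_measure _ ε hε0 hε24
  have hcompl : P Goodᶜ
      ≤ ENNReal.ofReal (24 * (Fintype.card S : ℝ) * (Fintype.card A : ℝ) * H * ε) := by
    calc P Goodᶜ ≤ P (⋃ p, Bad p) := measure_mono hsub
      _ ≤ ∑' p, P (Bad p) := measure_iUnion_le _
      _ = ∑ p, P (Bad p) := tsum_fintype _
      _ ≤ (Finset.univ : Finset (Fin H × S × A)).card • ENNReal.ofReal (16 * ε) :=
          Finset.sum_le_card_nsmul _ _ _ (fun p _ => hbound p)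
      _ ≤ ENNReal.ofReal (24 * (Fintype.card S : ℝ) * (Fintype.card A : ℝ) * H * ε) := by
          rw [nsmul_eq_mul, Finset.card_univ, Fintype.card_prod, Fintype.card_prod,
            Fintype.card_fin, ← ENNReal.ofReal_natCast,
            ← ENNReal.ofReal_mul (by positivity)]
          apply ENNReal.ofReal_le_ofReal
          push_cast
          nlinarith [show (0:ℝ) ≤ 8 * (Fintype.card S : ℝ) * (Fintype.card A : ℝ) * H * ε
            by positivity]
  have h1 : (1:ℝ≥0∞) ≤ P Good + P Goodᶜ := by
    rw [← measure_univ (μ := P), ← Set.union_compl_self Good]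
    exact measure_union_le _ _
  have h2 : ENNReal.ofReal (1 - 24 * Fintype.card S * Fintype.card A * H * ε) + P Goodᶜ
      ≤ 1 := by
    calc ENNReal.ofReal (1 - 24 * Fintype.card S * Fintype.card A * H * ε) + P Goodᶜ
        ≤ ENNReal.ofReal (1 - 24 * Fintype.card S * Fintype.card A * H * ε)
          + ENNReal.ofReal (24 * (Fintype.card S : ℝ) * (Fintype.card A : ℝ) * H * ε) :=
          add_le_add_right hcompl _
      _ ≤ ENNReal.ofReal ((1 - 24 * Fintype.card S * Fintype.card A * H * ε)
          + 24 * (Fintype.card S : ℝ) * (Fintype.card A : ℝ) * H * ε) :=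
          (ENNReal.ofReal_add htriv.le (by positivity)).symm.le
      _ = 1 := by rw [sub_add_cancel, ENNReal.ofReal_one]
  exact (ENNReal.add_le_add_iff_right (measure_ne_top P _)).1 (h2.trans h1)
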